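/- For $n \geq 3$, the $\mathbb{Z}$-submodule of $\mathbb{Z}^3$ spanned by the vectors $(n(n-1)A_i, 0, n(n+1)B_i)$ and $(\tfrac{n(n-1)}{2}A_i, nB_i, \tfrac{n(n+1)}{2}B_i)$ for $1 \leq i \leq n-1$ equals the submodule spanned by $(\tfrac{n(n-1)}{2}, n, \tfrac{n(n+1)}{2})$, $(n(n-1), 0, 0)$, and $(0, 2n, 0)$. -/

import Mathlib

open Finset

/-- `A_i = ∑_{j=1}^i (-1)^{i+j} C(i,j) j^{n-2}` -/
def A (n i : ℕ) : ℤ := ∑ j ∈ Finset.Icc 1 i, (-1) ^ (i + j) * (i.choose j : ℤ) * (j : ℤ) ^ (n - 2)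

/-- `B_i = ∑_{j=1}^i (-1)^{i+j} C(i,j) j^{n-1}` -/
def B (n i : ℕ) : ℤ := ∑ j ∈ Finset.Icc 1 i, (-1) ^ (i + j) * (i.choose j : ℤ) * (j : ℤ) ^ (n - 1)

lemma fd : ∀ (N m : ℕ), m < N → ∀ x : ℤ,
    ∑ k ∈ range (N+1), (-1:ℤ)^k * (N.choose k : ℤ) * (x + k)^m = 0 := by
  intro N
  induction N with
  | zero => intro m hm; omega
  | succ N ih =>
    intro m hm x
    have key2 : ∑ k ∈ range (N+2), (-1:ℤ)^k * (((N+1).choose k : ℤ) - (N.choose k : ℤ)) * (x + k)^m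
        = - ∑ k ∈ range (N+1), (-1:ℤ)^k * (N.choose k : ℤ) * ((x+1) + k)^m := by
      rw [Finset.sum_range_succ' (fun k => (-1:ℤ)^k * (((N+1).choose k : ℤ) - (N.choose k : ℤ)) * (x + k)^m)]
      have h1 : (∑ k ∈ range (N+1), (-1:ℤ)^(k+1) * (((N+1).choose (k+1) : ℤ) - (N.choose (k+1) : ℤ)) * (x + ((k:ℤ)+1))^m)
          = ∑ k ∈ range (N+1), -((-1:ℤ)^k * (N.choose k : ℤ) * ((x+1) + k)^m) := by
        apply Finset.sum_congr rfl
        intro k _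
        rw [Nat.choose_succ_succ]
        push_cast
        ring
      simp only [Nat.cast_add, Nat.cast_one] at h1 ⊢
      rw [h1, Finset.sum_neg_distrib]
      simp
    have key : ∑ k ∈ range (N+2), (-1:ℤ)^k * ((N+1).choose k : ℤ) * (x + k)^m
        = (∑ k ∈ range (N+1), (-1:ℤ)^k * (N.choose k : ℤ) * (x + k)^m)
          - (∑ k ∈ range (N+1), (-1:ℤ)^k * (N.choose k : ℤ) * ((x+1) + k)^m) := by
      have e1 : ∑ k ∈ range (N+2), (-1:ℤ)^k * (N.choose k : ℤ) * (x + k)^m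
          = ∑ k ∈ range (N+1), (-1:ℤ)^k * (N.choose k : ℤ) * (x + k)^m := by
        rw [Finset.sum_range_succ, Nat.choose_eq_zero_of_lt (by omega)]
        push_cast; ring
      have e0 : ∑ k ∈ range (N+2), (-1:ℤ)^k * ((N+1).choose k : ℤ) * (x + k)^m
          = ∑ k ∈ range (N+2), ((-1:ℤ)^k * (N.choose k : ℤ) * (x + k)^m
              + (-1:ℤ)^k * (((N+1).choose k : ℤ) - (N.choose k : ℤ)) * (x + k)^m) := by
        apply Finset.sum_congr rfl; intro k _; ring
      rw [e0, Finset.sum_add_distrib, e1, key2]; ring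
    rw [key, sub_eq_zero]
    have expand : ∀ k : ℕ, ((x+1) + (k:ℤ))^m = ∑ r ∈ range (m+1), (x+(k:ℤ))^r * (m.choose r : ℤ) := by
      intro k
      rw [show (x+1) + (k:ℤ) = (x+(k:ℤ)) + 1 by ring, add_pow]
      simp
    have e5 : ∑ k ∈ range (N+1), (-1:ℤ)^k * (N.choose k : ℤ) * ((x+1) + (k:ℤ))^m
        = ∑ k ∈ range (N+1), ((-1:ℤ)^k * (N.choose k : ℤ) * (x+(k:ℤ))^m
          + ∑ r ∈ range m, (m.choose r : ℤ) * ((-1:ℤ)^k * (N.choose k : ℤ) * (x+(k:ℤ))^r)) := by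
      apply Finset.sum_congr rfl
      intro k _
      rw [expand k, Finset.sum_range_succ, Nat.choose_self, Nat.cast_one, mul_one, mul_add,
        Finset.mul_sum, add_comm]
      congr 1
      apply Finset.sum_congr rfl; intro r _; ring
    rw [e5, Finset.sum_add_distrib]
    nth_rewrite 1 [← add_zero (∑ k ∈ range (N+1), (-1:ℤ)^k * (N.choose k : ℤ) * (x + (k:ℤ))^m)]
    congr 1
    rw [Finset.sum_comm]
    symm
    apply Finset.sum_eq_zero
    intro r hr
    rw [← Finset.mul_sum, ih r (by simp at hr; omega) x, mul_zero]

lemma sum_alt_choose (m M : ℕ) (h1 : 1 ≤ m) (h2 : m ≤ M) :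
    ∑ j ∈ Icc 1 M, (-1:ℤ)^j * (((M+1).choose (j+1) : ℕ) : ℤ) * (j:ℤ)^m = (-1:ℤ)^m := by
  have h0 := fd (M+1) m (by omega) (-1)
  rw [Finset.sum_range_succ' _ (M+1)] at h0
  rw [Finset.sum_range_succ' _ M] at h0
  simp only [pow_succ, pow_zero, Nat.choose_zero_right, Nat.cast_one] at h0
  rw [show Icc 1 M = Ico 1 (M+1) by rfl, Finset.sum_Ico_eq_sum_range]
  simp only [Nat.add_sub_cancel]
  have e : ∀ k ∈ range M, (-1:ℤ)^(1+k) * (((M+1).choose (1+k+1) : ℕ) : ℤ) * (((1+k : ℕ)):ℤ)^m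
      = -((-1:ℤ)^k * (-1) * (-1) * (((M+1).choose (k+1+1) : ℕ) : ℤ) * ((-1:ℤ) + ((k+1+1 : ℕ):ℤ))^m) := by
    intro k _
    have h3 : ((-1:ℤ) + ((k+1+1 : ℕ):ℤ)) = ((1+k : ℕ) : ℤ) := by push_cast; ring
    rw [h3, show (1+k+1) = (k+1+1) from by omega]
    ring
  rw [Finset.sum_congr rfl e, Finset.sum_neg_distrib]
  have z1 : ((1:ℤ) * -1 * ((M+1).choose (0+1) : ℤ) * ((-1:ℤ) + ((0+1:ℕ):ℤ))^m) = 0 := by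
    rw [show ((-1:ℤ) + ((0+1:ℕ):ℤ)) = 0 by norm_num, zero_pow (by omega), mul_zero]
  have z2 : ((1:ℤ) * 1 * ((-1:ℤ) + ((0:ℕ):ℤ))^m) = (-1:ℤ)^m := by norm_num
  rw [z1, z2] at h0
  linarith [h0]

lemma sum_S (m M : ℕ) (h1 : 1 ≤ m) (h2 : m ≤ M) :
    ∑ i ∈ Icc 1 M, (-1:ℤ)^i * (∑ j ∈ Icc 1 i, (-1:ℤ)^(i+j) * (i.choose j : ℤ) * (j:ℤ)^m)
      = (-1:ℤ)^m := by
  have e1 : ∀ i ∈ Icc 1 M, (-1:ℤ)^i * (∑ j ∈ Icc 1 i, (-1:ℤ)^(i+j) * (i.choose j : ℤ) * (j:ℤ)^m)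
      = ∑ j ∈ Icc 1 i, (-1:ℤ)^j * (i.choose j : ℤ) * (j:ℤ)^m := by
    intro i _
    rw [Finset.mul_sum]
    apply Finset.sum_congr rfl
    intro j _
    have : (-1:ℤ)^i * (-1:ℤ)^(i+j) = (-1:ℤ)^j := by
      rw [← pow_add, show i + (i+j) = 2*i + j from by omega, pow_add, pow_mul]
      norm_num
    calc (-1:ℤ)^i * ((-1:ℤ)^(i+j) * (i.choose j : ℤ) * (j:ℤ)^m)
        = ((-1:ℤ)^i * (-1:ℤ)^(i+j)) * (i.choose j : ℤ) * (j:ℤ)^m := by ring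
      _ = (-1:ℤ)^j * (i.choose j : ℤ) * (j:ℤ)^m := by rw [this]
  rw [Finset.sum_congr rfl e1]
  rw [Finset.sum_comm' (s := Icc 1 M) (t := fun i => Icc 1 i) (t' := Icc 1 M)
    (s' := fun j => Icc j M) (by intro i j; simp only [Finset.mem_Icc]; omega)]
  have e2 : ∀ j ∈ Icc 1 M, (∑ i ∈ Icc j M, (-1:ℤ)^j * (i.choose j : ℤ) * (j:ℤ)^m)
      = (-1:ℤ)^j * (((M+1).choose (j+1) : ℕ) : ℤ) * (j:ℤ)^m := by
    intro j _
    rw [show ∀ S : Finset ℕ, ∑ i ∈ S, (-1:ℤ)^j * (i.choose j : ℤ) * (j:ℤ)^m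
        = ((-1:ℤ)^j * (j:ℤ)^m) * ∑ i ∈ S, (i.choose j : ℤ) from
      fun S => by rw [Finset.mul_sum]; exact Finset.sum_congr rfl fun i _ => by ring]
    rw [← Nat.cast_sum, Nat.sum_Icc_choose]
    ring
  rw [Finset.sum_congr rfl e2]
  exact sum_alt_choose m M h1 h2

lemma A_one (n : ℕ) : A n 1 = 1 := by simp [A]
lemma B_one (n : ℕ) : B n 1 = 1 := by simp [B]

lemma two_dvd_sub (n : ℕ) (hn : 3 ≤ n) (i : ℕ) : 2 ∣ (A n i - B n i) := by
  rw [A, B, ← Finset.sum_sub_distrib]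
  apply Finset.dvd_sum
  intro j _
  have hpow : (j:ℤ)^(n-1) = (j:ℤ)^(n-2) * j := by
    rw [show n - 1 = (n-2) + 1 from by omega, pow_succ]
  rw [hpow]
  have e : (-1:ℤ)^(i+j) * (i.choose j:ℤ) * (j:ℤ)^(n-2) - (-1:ℤ)^(i+j) * (i.choose j:ℤ) * ((j:ℤ)^(n-2) * j)
      = ((-1:ℤ)^(i+j) * (i.choose j:ℤ)) * ((j:ℤ)^(n-2) * (1 - (j:ℤ))) := by ring
  rw [e]
  apply Dvd.dvd.mul_left
  have he : Even ((j:ℤ)^(n-2) * (1 - (j:ℤ))) := by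
    rcases Int.even_or_odd (j:ℤ) with hj | hj
    · exact (hj.pow_of_ne_zero (by omega)).mul_right _
    · exact ((odd_one.sub_odd hj)).mul_left _
  exact he.two_dvd

lemma key3 (n : ℕ) (hn : 3 ≤ n) :
    ∑ i ∈ Icc 1 (n-1), (-1:ℤ)^i * (A n i - B n i) = 2 * (-1:ℤ)^n := by
  have hA : ∑ i ∈ Icc 1 (n-1), (-1:ℤ)^i * A n i = (-1:ℤ)^(n-2) :=
    sum_S (n-2) (n-1) (by omega) (by omega)
  have hB : ∑ i ∈ Icc 1 (n-1), (-1:ℤ)^i * B n i = (-1:ℤ)^(n-1) :=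
    sum_S (n-1) (n-1) (by omega) (by omega)
  have e : ∀ i ∈ Icc 1 (n-1), (-1:ℤ)^i * (A n i - B n i)
      = (-1:ℤ)^i * A n i - (-1:ℤ)^i * B n i := fun i _ => by ring
  rw [Finset.sum_congr rfl e, Finset.sum_sub_distrib, hA, hB]
  have h2 : (-1:ℤ)^(n-2) = (-1:ℤ)^n := by
    rw [show n = (n-2) + 2 from by omega, pow_add]; norm_num
  have h1 : (-1:ℤ)^(n-1) = -(-1:ℤ)^n := by
    have hh : (-1:ℤ)^(n-1) * (-1) = (-1:ℤ)^n := by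
      rw [← pow_succ, show n-1+1 = n from by omega]
    linarith
  rw [h2, h1]; ring

theorem stmt4 (n : ℕ) (hn : 3 ≤ n) :
    Submodule.span ℤ
      ((⋃ i ∈ Finset.Icc 1 (n - 1),
        ({![(n : ℤ) * (n - 1) * A n i, 0, (n : ℤ) * (n + 1) * B n i],
          ![(n : ℤ) * (n - 1) / 2 * A n i, (n : ℤ) * B n i,
            (n : ℤ) * (n + 1) / 2 * B n i]} : Set (Fin 3 → ℤ)))) =
    Submodule.span ℤ
      ({![(n : ℤ) * (n - 1) / 2, (n : ℤ), (n : ℤ) * (n + 1) / 2],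
        ![(n : ℤ) * (n - 1), 0, 0],
        ![0, 2 * (n : ℤ), 0]} : Set (Fin 3 → ℤ)) := by
  have hdvda : (2:ℤ) ∣ (n:ℤ) * ((n:ℤ) - 1) := by
    have := Int.even_mul_succ_self ((n:ℤ) - 1)
    rw [show ((n:ℤ) - 1) * (((n:ℤ) - 1) + 1) = (n:ℤ) * ((n:ℤ) - 1) from by ring] at this
    exact this.two_dvd
  have hdvdc : (2:ℤ) ∣ (n:ℤ) * ((n:ℤ) + 1) := (Int.even_mul_succ_self (n:ℤ)).two_dvd
  set a := (n:ℤ) * ((n:ℤ) - 1) / 2 with ha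
  set c := (n:ℤ) * ((n:ℤ) + 1) / 2 with hc
  have h2a : (n:ℤ) * ((n:ℤ) - 1) = 2 * a := by rw [ha, Int.mul_ediv_cancel' hdvda]
  have h2c : (n:ℤ) * ((n:ℤ) + 1) = 2 * c := by rw [hc, Int.mul_ediv_cancel' hdvdc]
  simp only [h2a, h2c]
  apply le_antisymm
  · rw [Submodule.span_le]
    rintro x hx
    simp only [Set.mem_iUnion, Set.mem_insert_iff, Set.mem_singleton_iff] at hx
    obtain ⟨i, hi, hx⟩ := hx
    obtain ⟨t, ht⟩ := two_dvd_sub n hn i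
    have hA : A n i = B n i + 2 * t := by linarith
    have hw : (![a, (n:ℤ), c] : Fin 3 → ℤ) ∈ Submodule.span ℤ
        ({![a, (n:ℤ), c], ![2*a, 0, 0], ![0, 2*(n:ℤ), 0]} : Set (Fin 3 → ℤ)) :=
      Submodule.subset_span (Set.mem_insert _ _)
    have hp : (![2*a, 0, 0] : Fin 3 → ℤ) ∈ Submodule.span ℤ
        ({![a, (n:ℤ), c], ![2*a, 0, 0], ![0, 2*(n:ℤ), 0]} : Set (Fin 3 → ℤ)) :=
      Submodule.subset_span (Set.mem_insert_of_mem _ (Set.mem_insert _ _))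
    have hq : (![0, 2*(n:ℤ), 0] : Fin 3 → ℤ) ∈ Submodule.span ℤ
        ({![a, (n:ℤ), c], ![2*a, 0, 0], ![0, 2*(n:ℤ), 0]} : Set (Fin 3 → ℤ)) :=
      Submodule.subset_span (Set.mem_insert_of_mem _ (Set.mem_insert_of_mem _ rfl))
    rcases hx with hx | hx
    · have hrep : x = (2 * B n i) • ![a, (n:ℤ), c] + (2*t) • ![2*a, 0, 0]
          + (-(B n i)) • ![0, 2*(n:ℤ), 0] := by
        rw [hx]
        funext k
        fin_cases k <;>
          simp [Pi.add_apply, Pi.smul_apply, smul_eq_mul] <;>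
          (try rw [hA]) <;> ring
      rw [hrep]
      exact add_mem (add_mem (Submodule.smul_mem _ _ hw) (Submodule.smul_mem _ _ hp))
        (Submodule.smul_mem _ _ hq)
    · have hrep : x = (B n i) • ![a, (n:ℤ), c] + t • ![2*a, 0, 0] := by
        rw [hx]
        funext k
        fin_cases k <;>
          simp [Pi.add_apply, Pi.smul_apply, smul_eq_mul] <;>
          (try rw [hA]) <;> ring
      rw [hrep]
      exact add_mem (Submodule.smul_mem _ _ hw) (Submodule.smul_mem _ _ hp)
  · rw [Submodule.span_le]
    rintro x hx
    have hvmem : ∀ i, i ∈ Finset.Icc 1 (n-1) →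
        (![a * A n i, (n:ℤ) * B n i, c * B n i] : Fin 3 → ℤ) ∈ Submodule.span ℤ
          ((⋃ i ∈ Finset.Icc 1 (n - 1),
            ({![2*a * A n i, 0, 2*c * B n i],
              ![a * A n i, (n:ℤ) * B n i, c * B n i]} : Set (Fin 3 → ℤ)))) := by
      intro i hi
      exact Submodule.subset_span (Set.mem_iUnion₂.mpr ⟨i, hi, Or.inr rfl⟩)
    have humem : ∀ i, i ∈ Finset.Icc 1 (n-1) →
        (![2*a * A n i, 0, 2*c * B n i] : Fin 3 → ℤ) ∈ Submodule.span ℤ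
          ((⋃ i ∈ Finset.Icc 1 (n - 1),
            ({![2*a * A n i, 0, 2*c * B n i],
              ![a * A n i, (n:ℤ) * B n i, c * B n i]} : Set (Fin 3 → ℤ)))) := by
      intro i hi
      exact Submodule.subset_span (Set.mem_iUnion₂.mpr ⟨i, hi, Or.inl rfl⟩)
    have h1mem : (1:ℕ) ∈ Finset.Icc 1 (n-1) := by simp; omega
    have hv1 := hvmem 1 h1mem
    have hu1 := humem 1 h1mem
    have hsq : (-1:ℤ)^n * (-1:ℤ)^n = 1 := by
      rw [← pow_add, show n + n = 2*n from by ring, pow_mul]; norm_num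
    rcases hx with hx | hx | hx
    · -- x = w
      have : x = ![a * A n 1, (n:ℤ) * B n 1, c * B n 1] := by
        rw [hx, A_one, B_one]
        funext k; fin_cases k <;> simp
      rw [this]; exact hv1
    · -- x = p
      have hrep : x = ((-1:ℤ)^n) • ∑ i ∈ Finset.Icc 1 (n-1),
          ((-1:ℤ)^i) • ((![a * A n i, (n:ℤ) * B n i, c * B n i] : Fin 3 → ℤ)
            - (B n i) • ![a * A n 1, (n:ℤ) * B n 1, c * B n 1]) := by
        rw [hx, A_one, B_one]
        funext k
        fin_cases k
        · have hs : ∑ i ∈ Finset.Icc 1 (n-1),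
              (-1:ℤ)^i * (a * A n i - B n i * (a * 1)) = a * (2 * (-1:ℤ)^n) := by
            rw [← key3 n hn, Finset.mul_sum]
            apply Finset.sum_congr rfl
            intro i _; ring
          simp only [Pi.smul_apply, Finset.sum_apply, Pi.sub_apply, smul_eq_mul,
            Matrix.cons_val_zero, Fin.zero_eta, Fin.isValue]
          rw [hs]
          calc (2*a : ℤ) = 2*a * 1 := by ring
            _ = 2*a * ((-1:ℤ)^n * (-1:ℤ)^n) := by rw [hsq]
            _ = (-1:ℤ)^n * (a * (2 * (-1:ℤ)^n)) := by ring
        · simp only [Pi.smul_apply, Finset.sum_apply, Pi.sub_apply, smul_eq_mul,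
            Matrix.cons_val_one, Matrix.head_cons, Fin.mk_one, Fin.isValue, Matrix.cons_val_zero]
          rw [Finset.sum_eq_zero (fun i _ => by ring), mul_zero]
        · have e2 : ∀ (x y z : ℤ), (![x,y,z] : Fin 3 → ℤ) ⟨2, by norm_num⟩ = z :=
            fun _ _ _ => rfl
          simp only [Pi.smul_apply, Finset.sum_apply, Pi.sub_apply, smul_eq_mul, e2]
          rw [Finset.sum_eq_zero (fun i _ => by ring), mul_zero]
      rw [hrep]
      exact Submodule.smul_mem _ _ (Submodule.sum_mem _ (fun i hi =>
        Submodule.smul_mem _ _ (sub_mem (hvmem i hi) (Submodule.smul_mem _ _ hv1))))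
    · -- x = q
      have hrep : x = (2:ℤ) • (![a * A n 1, (n:ℤ) * B n 1, c * B n 1] : Fin 3 → ℤ)
          + (-1:ℤ) • ![2*a * A n 1, 0, 2*c * B n 1] := by
        rw [hx, A_one, B_one]
        funext k; fin_cases k <;> simp <;> ring
      rw [hrep]
      exact add_mem (Submodule.smul_mem _ _ hv1) (Submodule.smul_mem _ _ hu1)
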